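/- Feasibility of the repair ILP (Part (1)(d) of the proof of Theorem 1): Let V_1 be a finite set of variables containing a subset S of special variables, let V_2 be a finite set with S ⊆ V_2, let L be a finite nonempty set of locations, and let ν and − be two symbols not in V_1 ∪ V_2. For each (l, v_1) ∈ L × V_1 let Π_{l,v_1} be a finite set of pairs (π, c), where π is a partial map from V_1 ∪ {−} to V_2 ∪ {ν} and c ∈ ℕ. Consider 0–1 variables x_{v_1 v_2} for (v_1, v_2) ∈ (V_1 ∪ {−}) × (V_2 ∪ {ν}) and x_m for each m ∈ ⋃ Π_{l,v_1}, subject to the constraints: (1) Σ_{v_2 ∈ V_2 ∪ {ν}} x_{v_1 v_2} = 1 for each v_1 ∈ V_1; (2) x_{v v} = 1 for each v ∈ S; (3) Σ_{v_1 ∈ V_1 ∪ {−}} x_{v_1 v_2} = 1 for each v_2 ∈ V_2; (4) Σ_{m ∈ Π_{l,v_1}} x_m = 1 for each (l, v_1) ∈ L × V_1; (5) −x_m + x_{u_1 u_2} ≥ 0 for each m = (π, c) and each pair with π(u_1) = u_2. Define σ_ν(v) = v for v ∈ S and σ_ν(v_1) = ν for v_1 ∈ V_1 ∖ S. If for every (l,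 v_1) ∈ L × V_1 the set Π_{l,v_1} contains some pair (π, c) whose partial map π is contained in σ_ν (as a set of argument–value pairs), then the constraint system is satisfiable by some 0–1 assignment. -/
import Mathlib


/-- Feasibility of the repair ILP.  Variables of the
specification are `V₁` (with special variables `S ⊆ V₁`), variables of the
implementation are `V₂` (with `S ⊆ V₂`), locations are `L` (finite,
nonempty).  The token `ν` (fresh variable) is encoded by `none` in the second
component and the token `−` (deletion) by `none` in the first component of
`Option V`; a partial map `π` from `V₁ ∪ {−}` to `V₂ ∪ {ν}` is encoded as a
function `Option V → Option (Option V)` (outer `none` = undefined).  For each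
`(l, v₁) ∈ L × V₁`, `Pi l v₁` is a finite set of conditional matchings
`(π, c)`.  A 0–1 assignment is given by `x : Option V × Option V → ℕ` (the
variables `x_{v₁v₂}`) and `y l v₁ m` (the variables `x_m` for
`m ∈ Pi l v₁`), all taking values in `{0, 1}`.  If every `Pi l v₁`
(for `l ∈ L`, `v₁ ∈ V₁`) contains a pair whose partial map is contained in
`σ_ν` (where `σ_ν(v) = v` for `v ∈ S` and `σ_ν(v₁) = ν` for `v₁ ∈ V₁ ∖ S`),
then the constraint system (1)–(5) is satisfiable. -/
theorem repair_ilp_feasible {V Λ : Type} [DecidableEq V] [DecidableEq Λ]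
    (V₁ V₂ S : Finset V) (hS₁ : S ⊆ V₁) (hS₂ : S ⊆ V₂)
    (L : Finset Λ) (hL : L.Nonempty)
    (Pi : Λ → V → Set ((Option V → Option (Option V)) × ℕ))
    (hfin : ∀ l v, (Pi l v).Finite)
    (hfeas : ∀ l ∈ L, ∀ v₁ ∈ V₁, ∃ p ∈ Pi l v₁,
      ∀ (u w : Option V), p.1 u = some w →
        ∃ u' ∈ V₁, u = some u' ∧ w = (if u' ∈ S then some u' else none)) :
    ∃ (x : Option V × Option V → ℕ)
      (y : Λ → V → ((Option V → Option (Option V)) × ℕ) → ℕ),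
      -- 0–1 assignment
      (∀ p, x p ≤ 1) ∧ (∀ l v₁ m, y l v₁ m ≤ 1) ∧
      -- (1) each v₁ ∈ V₁ is matched to exactly one v₂ ∈ V₂ ∪ {ν}
      (∀ v₁ ∈ V₁, ∑ w ∈ insert none (V₂.image some), x (some v₁, w) = 1) ∧
      -- (2) each special variable is matched to itself
      (∀ v ∈ S, x (some v, some v) = 1) ∧
      -- (3) each v₂ ∈ V₂ is matched to exactly one v₁ ∈ V₁ ∪ {−}
      (∀ v₂ ∈ V₂, ∑ u ∈ insert none (V₁.image some), x (u, some v₂) = 1) ∧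
      -- (4) for each (l, v₁) exactly one conditional matching is selected
      (∀ l ∈ L, ∀ v₁ ∈ V₁, ∑ m ∈ (hfin l v₁).toFinset, y l v₁ m = 1) ∧
      -- (5) a selected conditional matching implies its variable pairs
      (∀ l ∈ L, ∀ v₁ ∈ V₁, ∀ m ∈ Pi l v₁, ∀ (u₁ u₂ : Option V),
        m.1 u₁ = some u₂ → y l v₁ m ≤ x (u₁, u₂)) := by
  classical
  let x : Option V × Option V → ℕ := fun p =>
    match p with
    | (some u, some w) => if u = w ∧ u ∈ S then 1 else 0
    | (some u, none) => if u ∈ V₁ ∧ u ∉ S then 1 else 0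
    | (none, some w) => if w ∈ V₂ ∧ w ∉ S then 1 else 0
    | (none, none) => 0
  refine ⟨x, fun l v₁ m => if h : l ∈ L ∧ v₁ ∈ V₁ then
      (if m = (hfeas l h.1 v₁ h.2).choose then 1 else 0) else 0,
      ?_, ?_, ?_, ?_, ?_, ?_, ?_⟩
  · rintro ⟨(_|u), (_|w)⟩ <;> simp [x] <;> split <;> simp
  · intro l v₁ m
    dsimp only
    split
    · split <;> simp
    · simp
  · intro v₁ hv₁
    have hnone : (none : Option V) ∉ V₂.image some := by simp
    rw [Finset.sum_insert hnone, Finset.sum_image (fun a _ b _ h => Option.some_injective _ h)]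
    by_cases hv : v₁ ∈ S
    · have : ∀ w ∈ V₂, x (some v₁, some w) = if w = v₁ then 1 else 0 := by
        intro w hw
        simp only [x]
        by_cases h : v₁ = w
        · subst h; simp [hv]
        · simp [h, Ne.symm h]
      rw [Finset.sum_congr rfl this, Finset.sum_ite_eq' V₂ v₁ (fun _ => 1)]
      simp [x, hv, hS₂ hv]
    · have : ∀ w ∈ V₂, x (some v₁, some w) = 0 := by
        intro w hw
        simp only [x]
        simp [hv]
      rw [Finset.sum_congr rfl this]
      simp [x, hv₁, hv]
  · intro v hv
    simp [x, hv]
  · intro v₂ hv₂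
    have hnone : (none : Option V) ∉ V₁.image some := by simp
    rw [Finset.sum_insert hnone, Finset.sum_image (fun a _ b _ h => Option.some_injective _ h)]
    by_cases hv : v₂ ∈ S
    · have : ∀ u ∈ V₁, x (some u, some v₂) = if u = v₂ then 1 else 0 := by
        intro u hu
        simp only [x]
        by_cases h : u = v₂
        · subst h; simp [hv]
        · simp [h]
      rw [Finset.sum_congr rfl this, Finset.sum_ite_eq' V₁ v₂ (fun _ => 1)]
      simp [x, hv, hS₁ hv]
    · have : ∀ u ∈ V₁, x (some u, some v₂) = 0 := by
        intro u hu
        simp only [x]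
        rw [if_neg]
        rintro ⟨rfl, h2⟩
        exact hv h2
      rw [Finset.sum_congr rfl this]
      simp [x, hv₂, hv]
  · intro l hl v₁ hv₁
    have h : l ∈ L ∧ v₁ ∈ V₁ := ⟨hl, hv₁⟩
    have hp := (hfeas l hl v₁ hv₁).choose_spec
    rw [Finset.sum_congr rfl (fun m _ => dif_pos h)]
    rw [Finset.sum_ite_eq' _ ((hfeas l hl v₁ hv₁).choose) (fun _ => 1)]
    simp [hp.1]
  · intro l hl v₁ hv₁ m hm u₁ u₂ hu
    have h : l ∈ L ∧ v₁ ∈ V₁ := ⟨hl, hv₁⟩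
    dsimp only
    rw [dif_pos h]
    split
    · rename_i heq
      subst heq
      obtain ⟨hmem, hspec⟩ := (hfeas l hl v₁ hv₁).choose_spec
      obtain ⟨u', hu', rfl, rfl⟩ := hspec u₁ u₂ hu
      by_cases hS : u' ∈ S
      · simp [x, hS]
      · simp [x, hS, hu']
    · exact Nat.zero_le _
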